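/- Fix an integer m ≥ 1 and set α = 2m/(2m−1), θ = π/(2(2m−1)), and let a = ((2m−1)/(2m)^α)·(−sin θ + i·cos θ) ∈ ℂ. Then (−1)^m·(α·a)^{2m−1} = 1/(2m), and Re(a) = −((2m−1)/(2m)^α)·sin θ < 0. -/

import Mathlib

open Real

/-- WKBJ root computation (i3)–(i4) for the rescaled poly-harmonic kernel. -/
theorem stmt_18 (m : ℕ) (hm : 1 ≤ m) (α θ : ℝ)
    (hα : α = (2*(m:ℝ)) / (2*(m:ℝ) - 1)) (hθ : θ = π / (2*(2*(m:ℝ) - 1)))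
    (a : ℂ)
    (ha : a = (((2*(m:ℝ) - 1) / (2*(m:ℝ)) ^ α : ℝ) : ℂ) *
      (-(Real.sin θ : ℂ) + Complex.I * (Real.cos θ : ℂ))) :
    (-1 : ℂ) ^ m * ((α : ℂ) * a) ^ (2*m - 1) = ((1 / (2*(m:ℝ)) : ℝ) : ℂ) ∧
    a.re = -((2*(m:ℝ) - 1) / (2*(m:ℝ)) ^ α) * Real.sin θ ∧
    a.re < 0 := by
  have hm1 : (1:ℝ) ≤ (m:ℝ) := by exact_mod_cast hm
  have h2m : (0:ℝ) < 2*(m:ℝ) := by linarith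
  have h2m1 : (0:ℝ) < 2*(m:ℝ) - 1 := by linarith
  have hθpos : 0 < θ := by rw [hθ]; positivity
  have hθlt : θ < π := by
    rw [hθ]
    have h1 : (2:ℝ) ≤ 2*(2*(m:ℝ)-1) := by linarith
    have := div_le_div_of_nonneg_left pi_pos.le two_pos h1
    have h2 : π/2 < π := by linarith [pi_pos]
    linarith
  have hsin : 0 < Real.sin θ := Real.sin_pos_of_pos_of_lt_pi hθpos hθlt
  have hc : 0 < (2*(m:ℝ) - 1) / (2*(m:ℝ)) ^ α := by positivity
  have hre : a.re = -((2*(m:ℝ) - 1) / (2*(m:ℝ)) ^ α) * Real.sin θ := by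
    rw [ha]; simp [Complex.mul_re, Complex.add_re, Complex.add_im, Complex.neg_re, Complex.neg_im,
      Complex.mul_im, Complex.I_re, Complex.I_im, Complex.ofReal_re, Complex.ofReal_im,
      -Complex.ofReal_sin, -Complex.ofReal_cos]
  refine ⟨?_, hre, ?_⟩
  · -- main computation
    have hz : (-(Real.sin θ : ℂ) + Complex.I * (Real.cos θ : ℂ)) =
        Complex.exp (((θ + π/2 : ℝ) : ℂ) * Complex.I) := by
      rw [Complex.exp_mul_I, ← Complex.ofReal_cos, ← Complex.ofReal_sin,
        Real.cos_add_pi_div_two, Real.sin_add_pi_div_two]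
      push_cast; ring
    have hαc : α * ((2*(m:ℝ)-1)/(2*(m:ℝ))^α) = (2*(m:ℝ))^(1-α) := by
      rw [Real.rpow_sub h2m, Real.rpow_one, hα]
      field_simp
    have key : (α:ℂ) * a =
        (((2*(m:ℝ))^(1-α) : ℝ) : ℂ) * Complex.exp (((θ + π/2 : ℝ) : ℂ) * Complex.I) := by
      rw [ha, hz, ← mul_assoc, ← Complex.ofReal_mul, hαc]
    have hcast : ((2*m - 1 : ℕ) : ℝ) = 2*(m:ℝ) - 1 := by
      have : 1 ≤ 2*m := by omega
      push_cast [this]; ring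
    have hpow1 : ((2*(m:ℝ))^(1-α))^(2*m-1 : ℕ) = 1/(2*(m:ℝ)) := by
      rw [← Real.rpow_natCast ((2*(m:ℝ))^(1-α)) (2*m-1), ← Real.rpow_mul h2m.le, hcast]
      have : (1-α)*(2*(m:ℝ)-1) = -1 := by rw [hα]; field_simp; ring
      rw [this, Real.rpow_neg_one]
      exact (one_div _).symm
    have hpow2 : (Complex.exp (((θ + π/2 : ℝ) : ℂ) * Complex.I))^(2*m-1 : ℕ)
        = (-1 : ℂ)^m := by
      rw [← Complex.exp_nat_mul]
      have hang : ((2*m-1 : ℕ) : ℝ) * (θ + π/2) = m * π := by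
        rw [hcast, hθ]; field_simp; ring
      have : ((2*m-1 : ℕ) : ℂ) * (((θ + π/2 : ℝ) : ℂ) * Complex.I)
          = (m : ℕ) * (↑π * Complex.I) := by
        rw [← mul_assoc, ← Complex.ofReal_natCast, ← Complex.ofReal_mul, hang]
        push_cast; ring
      rw [this, Complex.exp_nat_mul, Complex.exp_pi_mul_I]
    rw [key, mul_pow, ← Complex.ofReal_pow, hpow1, hpow2]
    rw [show (-1:ℂ)^m * ((((1/(2*(m:ℝ))):ℝ):ℂ) * (-1:ℂ)^m)
        = ((-1:ℂ)*(-1))^m * (((1/(2*(m:ℝ))):ℝ):ℂ) by rw [mul_pow]; ring]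
    norm_num
  · rw [hre]
    have := mul_pos hc hsin
    linarith
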